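/- Let d ≥ 2 be an integer, A, B ∈ ℚ[X] nonzero coprime polynomials of degrees r_a, r_b, and let f ∈ ℚ((z^{−1})) be a non-rational formal Laurent series satisfying B(z)f(z) = A(z)f(z^d). Then the size of any primitive gap in Φ(f) does not exceed (2d − 1)(r_a + r_b)/(d − 1). -/

import Mathlib

open Polynomial Filter

/-- The irrationality exponent of a real number `ξ`: the supremum (in `EReal`) of all real `m`
such that `|ξ - p/q| < q^{-m}` holds for infinitely many rationals `p/q` (`q ≥ 1`). -/
noncomputable def irrationalityExponent (ξ : ℝ) : EReal :=
  sSup {μ : EReal | ∃ m : ℝ, μ = (m : EReal) ∧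
    {x : ℚ | |ξ - (x : ℝ)| < (x.den : ℝ) ^ (-m)}.Infinite}

/-- For a formal Laurent series `f(z) = ∑_i c i · z^{-i}` in `z⁻¹` (coefficients `c : ℤ → ℚ`),
`polyMulCoeff P c i` is the coefficient of `z^{-i}` in the product `P(z)·f(z)`. -/
noncomputable def polyMulCoeff (P : Polynomial ℚ) (c : ℤ → ℚ) (i : ℤ) : ℚ :=
  ∑ j ∈ Finset.range (P.natDegree + 1), P.coeff j * c (i + j)

/-- Coefficient of `z^{-i}` in `f(z^d)`, where `f(z) = ∑_i c i · z^{-i}`. -/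
noncomputable def substPowCoeff (d : ℕ) (c : ℤ → ℚ) (i : ℤ) : ℚ :=
  if (d : ℤ) ∣ i then c (i / d) else 0

/-- Coefficient of `z^{-i}` in a polynomial `p(z)`. -/
noncomputable def polyCoeffZinv (p : Polynomial ℚ) (i : ℤ) : ℚ :=
  if i ≤ 0 then p.coeff (-i).toNat else 0

/-- `c` is the coefficient function of a Laurent series in `z⁻¹`:
`f(z) = ∑_{i ≥ i₀} c i · z^{-i}` (support bounded below). -/
def IsLaurentSupport (c : ℤ → ℚ) : Prop := ∃ i₀ : ℤ, ∀ i < i₀, c i = 0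

/-- The Mahler functional equation `B(z)·f(z) = A(z)·f(z^d)`, stated coefficientwise for the
Laurent series `f(z) = ∑_i c i · z^{-i}`. -/
def MahlerEq (d : ℕ) (A B : Polynomial ℚ) (c : ℤ → ℚ) : Prop :=
  ∀ i : ℤ, polyMulCoeff B c i = polyMulCoeff A (substPowCoeff d c) i

/-- The Laurent series `f(z) = ∑_i c i · z^{-i}` is a rational function. -/
def IsRationalFun (c : ℤ → ℚ) : Prop :=
  ∃ p q : Polynomial ℚ, q ≠ 0 ∧ ∀ i : ℤ, polyMulCoeff q c i = polyCoeffZinv p i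

/-- `p/q` is a continued-fraction convergent of the Laurent series `f(z) = ∑_i c i · z^{-i}`:
`p, q` are coprime, `q ≠ 0`, and `q(z)f(z) - p(z)` only involves the powers `z^{-i}` with
`i > deg q` (ultrametric best-approximation criterion). -/
def IsConvergent (c : ℤ → ℚ) (p q : Polynomial ℚ) : Prop :=
  IsCoprime p q ∧ q ≠ 0 ∧
  ∀ i : ℤ, i ≤ (q.natDegree : ℤ) → polyMulCoeff q c i = polyCoeffZinv p i

/-- `p/q` is a convergent of `f` whose error `q(z)f(z) - p(z) = ∑_{i ≥ e} c' i · z^{-i}` has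
order exactly `e` (so `c' e ≠ 0`); for the `k`-th convergent, `e` is the degree `d_{k+1}` of the
denominator of the next convergent. -/
def IsConvergentWithOrder (c : ℤ → ℚ) (p q : Polynomial ℚ) (e : ℤ) : Prop :=
  IsCoprime p q ∧ q ≠ 0 ∧ (q.natDegree : ℤ) < e ∧
  (∀ i : ℤ, i < e → polyMulCoeff q c i = polyCoeffZinv p i) ∧
  polyMulCoeff q c e ≠ polyCoeffZinv p e

/-- The value `f(b) = ∑_i c i · b^{-i}` of the Laurent series at a point `b`. -/
noncomputable def mahlerValue (c : ℤ → ℚ) (b : ℝ) : ℝ := ∑' i : ℤ, (c i : ℝ) * b ^ (-i)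

/-- `b` lies inside the disc of convergence of `f`: `∑_i c i · b^{-i}` converges absolutely. -/
def InDiscOfConvergence (c : ℤ → ℚ) (b : ℝ) : Prop :=
  Summable fun i : ℤ => |(c i : ℝ) * b ^ (-i)|

/-- `Φ(f)`: the set of degrees of denominators of convergents of `f`. -/
def convDegrees (c : ℤ → ℚ) : Set ℕ :=
  {n | ∃ p q : Polynomial ℚ, IsConvergent c p q ∧ q.natDegree = n}

/-- `[u,v]` is a gap in `Φ(f)`: `u, v ∈ Φ(f)`, `u < v`, and no element of `Φ(f)` lies strictly
between `u` and `v`. Its size is `v - u`. -/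
def GapIn (c : ℤ → ℚ) (u v : ℕ) : Prop :=
  u ∈ convDegrees c ∧ v ∈ convDegrees c ∧ u < v ∧
  ∀ w : ℕ, u < w → w < v → w ∉ convDegrees c

/-- `[u,v]` is a big gap in `Φ(f)`: a gap whose size exceeds `(r_a + r_b)/(d-1)`. -/
def BigGap (c : ℤ → ℚ) (A B : Polynomial ℚ) (d : ℕ) (u v : ℕ) : Prop :=
  GapIn c u v ∧
  ((A.natDegree : ℝ) + (B.natDegree : ℝ)) / ((d : ℝ) - 1) < (v : ℝ) - (u : ℝ)

/-- The partial order `≺` on big gaps (recorded through the left endpoints, which determine the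
gaps' convergents): the gap at `u` precedes the gap at `u'` if for some `m ≥ 1`,
`p_{u'}/q_{u'} = ∏_{t=0}^{m-1} (A(z^{d^t})/B(z^{d^t})) · p_u(z^{d^m})/q_u(z^{d^m})`
as rational functions. -/
def GapPrec (c : ℤ → ℚ) (A B : Polynomial ℚ) (d : ℕ) (u u' : ℕ) : Prop :=
  ∃ (pu qu pu' qu' : Polynomial ℚ) (m : ℕ), 0 < m ∧
    IsConvergent c pu qu ∧ qu.natDegree = u ∧
    IsConvergent c pu' qu' ∧ qu'.natDegree = u' ∧
    pu' * ((∏ t ∈ Finset.range m, B.comp (Polynomial.X ^ d ^ t))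
            * qu.comp (Polynomial.X ^ d ^ m))
      = qu' * ((∏ t ∈ Finset.range m, A.comp (Polynomial.X ^ d ^ t))
            * pu.comp (Polynomial.X ^ d ^ m))

/-- A big gap is primitive if no big gap precedes it under `≺`. -/
def PrimitiveGap (c : ℤ → ℚ) (A B : Polynomial ℚ) (d : ℕ) (u v : ℕ) : Prop :=
  BigGap c A B d u v ∧ ¬ ∃ u'' v'' : ℕ, BigGap c A B d u'' v'' ∧ GapPrec c A B d u'' u

namespace MahlerAux

lemma polyMulCoeff_eq_sum (P : Polynomial ℚ) (c : ℤ → ℚ) (i : ℤ) {M : ℕ}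
    (h : P.natDegree < M) :
    polyMulCoeff P c i = ∑ j ∈ Finset.range M, P.coeff j * c (i + j) := by
  unfold polyMulCoeff
  refine Finset.sum_subset (Finset.range_subset_range.2 h) ?_
  intro j _ hj2
  simp only [Finset.mem_range, not_lt] at hj2
  rw [Polynomial.coeff_eq_zero_of_natDegree_lt (by omega), zero_mul]

lemma polyMulCoeff_add_left (P Q : Polynomial ℚ) (c : ℤ → ℚ) (i : ℤ) :
    polyMulCoeff (P + Q) c i = polyMulCoeff P c i + polyMulCoeff Q c i := by
  set M := max (P + Q).natDegree (max P.natDegree Q.natDegree) + 1 with hM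
  rw [polyMulCoeff_eq_sum (P+Q) c i (M := M) (by omega),
    polyMulCoeff_eq_sum P c i (M := M) (by omega),
    polyMulCoeff_eq_sum Q c i (M := M) (by omega), ← Finset.sum_add_distrib]
  refine Finset.sum_congr rfl fun j _ => ?_
  rw [Polynomial.coeff_add]; ring

lemma polyMulCoeff_C (a : ℚ) (c : ℤ → ℚ) (i : ℤ) :
    polyMulCoeff (Polynomial.C a) c i = a * c i := by
  simp [polyMulCoeff]

lemma polyMulCoeff_C_mul (a : ℚ) (P : Polynomial ℚ) (c : ℤ → ℚ) (i : ℤ) :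
    polyMulCoeff (Polynomial.C a * P) c i = a * polyMulCoeff P c i := by
  rw [polyMulCoeff_eq_sum (Polynomial.C a * P) c i (M := P.natDegree + 1)
    (Nat.lt_succ_of_le (Polynomial.natDegree_C_mul_le a P)), polyMulCoeff, Finset.mul_sum]
  refine Finset.sum_congr rfl fun j _ => ?_
  rw [Polynomial.coeff_C_mul]; ring

lemma polyMulCoeff_X_mul (P : Polynomial ℚ) (c : ℤ → ℚ) (i : ℤ) :
    polyMulCoeff (Polynomial.X * P) c i = polyMulCoeff P c (i + 1) := by
  rcases eq_or_ne P 0 with rfl | hP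
  · simp [polyMulCoeff]
  have hdeg : (Polynomial.X * P).natDegree < P.natDegree + 2 := by
    rw [Polynomial.natDegree_mul Polynomial.X_ne_zero hP, Polynomial.natDegree_X]; omega
  rw [polyMulCoeff_eq_sum (Polynomial.X * P) c i hdeg, Finset.sum_range_succ']
  have h0 : (Polynomial.X * P).coeff 0 = 0 := by
    rw [Polynomial.mul_coeff_zero, Polynomial.coeff_X_zero, zero_mul]
  rw [h0, zero_mul, add_zero, polyMulCoeff]
  refine Finset.sum_congr rfl fun j _ => ?_
  rw [Polynomial.coeff_X_mul]
  congr 1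
  push_cast; ring

lemma polyMulCoeff_Xpow_mul (k : ℕ) (P : Polynomial ℚ) (c : ℤ → ℚ) (i : ℤ) :
    polyMulCoeff (Polynomial.X ^ k * P) c i = polyMulCoeff P c (i + k) := by
  induction k generalizing i with
  | zero => simp
  | succ k ih =>
      have h : (Polynomial.X : Polynomial ℚ) ^ (k+1) * P
          = Polynomial.X * (Polynomial.X ^ k * P) := by ring
      rw [h, polyMulCoeff_X_mul, ih]
      congr 1
      push_cast; ring

lemma polyMulCoeff_mul (P Q : Polynomial ℚ) (c : ℤ → ℚ) (i : ℤ) :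
    polyMulCoeff (P * Q) c i = polyMulCoeff P (fun j => polyMulCoeff Q c j) i := by
  induction P using Polynomial.induction_on generalizing i with
  | C a => rw [polyMulCoeff_C_mul, polyMulCoeff_C]
  | add p q hp hq =>
      rw [add_mul, polyMulCoeff_add_left, hp, hq, polyMulCoeff_add_left]
  | monomial n a ih =>
      have h1 : Polynomial.C a * Polynomial.X ^ (n+1) * Q
          = Polynomial.X * (Polynomial.C a * Polynomial.X ^ n * Q) := by ring
      have h2 : Polynomial.C a * Polynomial.X ^ (n+1)
          = Polynomial.X * (Polynomial.C a * Polynomial.X ^ n) := by ring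
      rw [h1, polyMulCoeff_X_mul, ih, h2, polyMulCoeff_X_mul]

lemma polyCoeffZinv_add (p q : Polynomial ℚ) (i : ℤ) :
    polyCoeffZinv (p + q) i = polyCoeffZinv p i + polyCoeffZinv q i := by
  unfold polyCoeffZinv; split <;> simp

lemma polyCoeffZinv_C_mul (a : ℚ) (p : Polynomial ℚ) (i : ℤ) :
    polyCoeffZinv (Polynomial.C a * p) i = a * polyCoeffZinv p i := by
  unfold polyCoeffZinv; split <;> simp

lemma polyCoeffZinv_X_mul (p : Polynomial ℚ) (i : ℤ) :
    polyCoeffZinv (Polynomial.X * p) i = polyCoeffZinv p (i + 1) := by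
  unfold polyCoeffZinv
  rcases lt_trichotomy i 0 with hi | rfl | hi
  · rw [if_pos hi.le, if_pos (by omega)]
    have h1 : (-i).toNat = (-(i+1)).toNat + 1 := by omega
    rw [h1, Polynomial.coeff_X_mul]
  · rw [if_pos le_rfl, if_neg (by omega)]
    simp
  · rw [if_neg (by omega), if_neg (by omega)]

lemma polyCoeffZinv_Xpow_mul (k : ℕ) (p : Polynomial ℚ) (i : ℤ) :
    polyCoeffZinv (Polynomial.X ^ k * p) i = polyCoeffZinv p (i + k) := by
  induction k generalizing i with
  | zero => simp
  | succ k ih =>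
      have h : (Polynomial.X : Polynomial ℚ) ^ (k+1) * p
          = Polynomial.X * (Polynomial.X ^ k * p) := by ring
      rw [h, polyCoeffZinv_X_mul, ih]
      congr 1; push_cast; ring

lemma polyCoeffZinv_C (a : ℚ) (i : ℤ) :
    polyCoeffZinv (Polynomial.C a) i = if i = 0 then a else 0 := by
  unfold polyCoeffZinv
  rcases lt_trichotomy i 0 with hi | rfl | hi
  · rw [if_pos hi.le, if_neg hi.ne, Polynomial.coeff_C, if_neg (by omega)]
  · simp
  · rw [if_neg (by omega), if_neg (by omega)]

lemma polyMulCoeff_sub_fn (P : Polynomial ℚ) (s t : ℤ → ℚ) (i : ℤ) :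
    polyMulCoeff P (fun j => s j - t j) i = polyMulCoeff P s i - polyMulCoeff P t i := by
  unfold polyMulCoeff
  rw [← Finset.sum_sub_distrib]
  exact Finset.sum_congr rfl fun j _ => by ring

lemma polyMulCoeff_smul_fn (P : Polynomial ℚ) (a : ℚ) (s : ℤ → ℚ) (i : ℤ) :
    polyMulCoeff P (fun j => a * s j) i = a * polyMulCoeff P s i := by
  unfold polyMulCoeff
  rw [Finset.mul_sum]
  exact Finset.sum_congr rfl fun j _ => by ring

lemma polyMulCoeff_polyCoeffZinv (P q : Polynomial ℚ) (i : ℤ) :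
    polyMulCoeff P (polyCoeffZinv q) i = polyCoeffZinv (P * q) i := by
  induction P using Polynomial.induction_on generalizing i with
  | C a => rw [polyMulCoeff_C, polyCoeffZinv_C_mul]
  | add p1 p2 h1 h2 =>
      rw [polyMulCoeff_add_left, h1, h2, add_mul, polyCoeffZinv_add]
  | monomial n a ih =>
      have h1 : Polynomial.C a * Polynomial.X ^ (n+1)
          = Polynomial.X * (Polynomial.C a * Polynomial.X ^ n) := by ring
      rw [h1, polyMulCoeff_X_mul, ih,
        show Polynomial.X * (Polynomial.C a * Polynomial.X ^ n) * q
          = Polynomial.X * (Polynomial.C a * Polynomial.X ^ n * q) from by ring,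
        polyCoeffZinv_X_mul]

lemma substPowCoeff_smul (d : ℕ) (a : ℚ) (s : ℤ → ℚ) (i : ℤ) :
    substPowCoeff d (fun j => a * s j) i = a * substPowCoeff d s i := by
  unfold substPowCoeff; split <;> simp

lemma substPowCoeff_add (d : ℕ) (s t : ℤ → ℚ) (i : ℤ) :
    substPowCoeff d (fun j => s j + t j) i = substPowCoeff d s i + substPowCoeff d t i := by
  unfold substPowCoeff; split <;> simp

lemma substPowCoeff_congr (d : ℕ) {s t : ℤ → ℚ} (h : ∀ j, s j = t j) (i : ℤ) :
    substPowCoeff d s i = substPowCoeff d t i := by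
  unfold substPowCoeff; split <;> simp [h]

lemma substPowCoeff_shift (d : ℕ) (hd : 0 < d) (s : ℤ → ℚ) (i : ℤ) :
    substPowCoeff d s (i + d) = substPowCoeff d (fun j => s (j + 1)) i := by
  have hdz : (d : ℤ) ≠ 0 := by exact_mod_cast hd.ne'
  unfold substPowCoeff
  by_cases h : (d:ℤ) ∣ i
  · rw [if_pos (h.add (dvd_refl _)), if_pos h]
    have h2 := Int.add_mul_ediv_right i 1 hdz
    rw [one_mul] at h2
    rw [h2]
  · rw [if_neg (fun hc => h (by simpa using hc.sub (dvd_refl (d:ℤ)))), if_neg h]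

lemma polyMulCoeff_comp (d : ℕ) (hd : 0 < d) (P : Polynomial ℚ) (s : ℤ → ℚ) (i : ℤ) :
    polyMulCoeff (P.comp (Polynomial.X ^ d)) (substPowCoeff d s) i
      = substPowCoeff d (fun j => polyMulCoeff P s j) i := by
  induction P using Polynomial.induction_on generalizing i with
  | C a =>
      rw [Polynomial.C_comp, polyMulCoeff_C]
      rw [show (fun j => polyMulCoeff (Polynomial.C a) s j) = fun j => a * s j from
        funext fun j => polyMulCoeff_C a s j, substPowCoeff_smul]
  | add p1 p2 h1 h2 =>
      rw [Polynomial.add_comp, polyMulCoeff_add_left, h1, h2,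
        substPowCoeff_congr d (fun j => polyMulCoeff_add_left p1 p2 s j) i,
        substPowCoeff_add]
  | monomial n a ih =>
      have hcomp : (Polynomial.C a * Polynomial.X ^ (n+1)).comp (Polynomial.X ^ d)
          = Polynomial.X ^ d * ((Polynomial.C a * Polynomial.X ^ n).comp (Polynomial.X ^ d)) := by
        simp only [Polynomial.mul_comp, Polynomial.pow_comp, Polynomial.X_comp, Polynomial.C_comp,
          pow_succ]
        ring
      rw [hcomp, polyMulCoeff_Xpow_mul, ih, substPowCoeff_shift d hd]
      refine (substPowCoeff_congr d (fun j => ?_) i).symm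
      rw [show Polynomial.C a * Polynomial.X ^ (n+1)
          = Polynomial.X * (Polynomial.C a * Polynomial.X ^ n) from by ring,
        polyMulCoeff_X_mul]

lemma polyCoeffZinv_comp (d : ℕ) (hd : 0 < d) (p : Polynomial ℚ) (i : ℤ) :
    polyCoeffZinv (p.comp (Polynomial.X ^ d)) i = substPowCoeff d (polyCoeffZinv p) i := by
  induction p using Polynomial.induction_on generalizing i with
  | C a =>
      rw [Polynomial.C_comp, polyCoeffZinv_C]
      unfold substPowCoeff
      by_cases h : (d:ℤ) ∣ i
      · rw [if_pos h, polyCoeffZinv_C]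
        have hiff : i / d = 0 ↔ i = 0 := by
          constructor
          · intro h0
            obtain ⟨k, rfl⟩ := h
            rw [Int.mul_ediv_cancel_left _ (by exact_mod_cast hd.ne')] at h0
            rw [h0, mul_zero]
          · rintro rfl; simp
        by_cases hi : i = 0
        · rw [if_pos hi, if_pos (hiff.2 hi)]
        · rw [if_neg hi, if_neg (fun hc => hi (hiff.1 hc))]
      · rw [if_neg h, if_neg (fun hi => h (by rw [hi]; exact dvd_zero _))]
  | add p1 p2 h1 h2 =>
      rw [Polynomial.add_comp, polyCoeffZinv_add, h1, h2, ← substPowCoeff_add]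
      exact substPowCoeff_congr d (fun j => (polyCoeffZinv_add p1 p2 j).symm) i
  | monomial n a ih =>
      have hcomp : (Polynomial.C a * Polynomial.X ^ (n+1)).comp (Polynomial.X ^ d)
          = Polynomial.X ^ d * ((Polynomial.C a * Polynomial.X ^ n).comp (Polynomial.X ^ d)) := by
        simp only [Polynomial.mul_comp, Polynomial.pow_comp, Polynomial.X_comp, Polynomial.C_comp,
          pow_succ]
        ring
      rw [hcomp, polyCoeffZinv_Xpow_mul, ih, substPowCoeff_shift d hd]
      refine (substPowCoeff_congr d (fun j => ?_) i).symm
      rw [show Polynomial.C a * Polynomial.X ^ (n+1)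
          = Polynomial.X * (Polynomial.C a * Polynomial.X ^ n) from by ring,
        polyCoeffZinv_X_mul]

lemma polyCoeffZinv_sub (p q : Polynomial ℚ) (i : ℤ) :
    polyCoeffZinv (p - q) i = polyCoeffZinv p i - polyCoeffZinv q i := by
  unfold polyCoeffZinv; split <;> simp [Polynomial.coeff_sub]

lemma polyMulCoeff_eq_zero_of_lt {s : ℤ → ℚ} {e : ℤ} (hs : ∀ j, j < e → s j = 0)
    (P : Polynomial ℚ) {i : ℤ} (hi : i < e - P.natDegree) : polyMulCoeff P s i = 0 := by
  unfold polyMulCoeff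
  refine Finset.sum_eq_zero fun j hj => ?_
  rw [Finset.mem_range] at hj
  rw [hs _ (by omega), mul_zero]

lemma polyMulCoeff_lead {s : ℤ → ℚ} {e : ℤ} (hs : ∀ j, j < e → s j = 0)
    (P : Polynomial ℚ) : polyMulCoeff P s (e - P.natDegree) = P.leadingCoeff * s e := by
  unfold polyMulCoeff
  rw [Finset.sum_range_succ]
  have h0 : ∀ j ∈ Finset.range P.natDegree, P.coeff j * s (e - P.natDegree + j) = 0 := by
    intro j hj
    rw [Finset.mem_range] at hj
    rw [hs _ (by omega), mul_zero]
  rw [Finset.sum_eq_zero h0, zero_add, Polynomial.leadingCoeff]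
  have harg : e - (P.natDegree : ℤ) + P.natDegree = e := by omega
  rw [harg]

lemma poly_eq_zero_of_polyCoeffZinv {r : Polynomial ℚ}
    (h : ∀ i : ℤ, i ≤ 0 → polyCoeffZinv r i = 0) : r = 0 := by
  ext n
  have hn := h (-(n:ℤ)) (by omega)
  unfold polyCoeffZinv at hn
  rw [if_pos (by omega)] at hn
  simpa using hn

noncomputable def errC (c' : ℤ → ℚ) (p q : Polynomial ℚ) : ℤ → ℚ :=
  fun i => polyMulCoeff q c' i - polyCoeffZinv p i

lemma errC_mul_poly (c' : ℤ → ℚ) (g p q : Polynomial ℚ) (i : ℤ) :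
    errC c' (g * p) (g * q) i = polyMulCoeff g (errC c' p q) i := by
  unfold errC
  rw [polyMulCoeff_mul, ← polyMulCoeff_polyCoeffZinv, ← polyMulCoeff_sub_fn]

lemma errC_smul (c' : ℤ → ℚ) (a : ℚ) (p q : Polynomial ℚ) (i : ℤ) :
    errC c' (Polynomial.C a * p) (Polynomial.C a * q) i = a * errC c' p q i := by
  unfold errC
  rw [polyMulCoeff_C_mul, polyCoeffZinv_C_mul]; ring

lemma errC_support {c' : ℤ → ℚ} (hc : ∃ i₀ : ℤ, ∀ i < i₀, c' i = 0) (p q : Polynomial ℚ) :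
    ∃ b : ℤ, ∀ i < b, errC c' p q i = 0 := by
  obtain ⟨i₀, h0⟩ := hc
  refine ⟨min (i₀ - q.natDegree) (-(p.natDegree : ℤ)), fun i hi => ?_⟩
  unfold errC
  rw [polyMulCoeff_eq_zero_of_lt (fun j hj => h0 j hj) q (by omega)]
  unfold polyCoeffZinv
  split
  · rw [Polynomial.coeff_eq_zero_of_natDegree_lt (by omega), sub_zero]
  · rw [sub_zero]

lemma exists_ord {s : ℤ → ℚ} (hbd : ∃ b : ℤ, ∀ i < b, s i = 0) (hne : ∃ i, s i ≠ 0) :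
    ∃ e : ℤ, s e ≠ 0 ∧ ∀ i < e, s i = 0 := by
  obtain ⟨b, hb⟩ := hbd
  obtain ⟨e, he, hmin⟩ := Int.exists_least_of_bdd (P := fun i => s i ≠ 0)
    ⟨b, fun z hz => le_of_not_gt fun hlt => hz (hb z hlt)⟩ hne
  exact ⟨e, he, fun i hi => by_contra fun h => absurd (hmin i h) (by omega)⟩

lemma vanish_transfer {g : Polynomial ℚ} (hg : g ≠ 0) {s : ℤ → ℚ}
    (hsupp : ∃ b : ℤ, ∀ i < b, s i = 0) {e : ℤ}
    (h : ∀ i < e, polyMulCoeff g s i = 0) : ∀ i, i < e + g.natDegree → s i = 0 := by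
  by_contra hcon
  push_neg at hcon
  obtain ⟨i1, hi1e, hi1⟩ := hcon
  obtain ⟨j, hj, hjmin⟩ := exists_ord hsupp ⟨i1, hi1⟩
  have hje : j ≤ i1 := le_of_not_gt fun hlt => hi1 (hjmin i1 hlt)
  have hlead := polyMulCoeff_lead (s := s) (e := j) hjmin g
  have hz : polyMulCoeff g s (j - g.natDegree) = 0 := h _ (by omega)
  rw [hz] at hlead
  exact (mul_ne_zero (Polynomial.leadingCoeff_ne_zero.2 hg) hj) hlead.symm

lemma cross (c' : ℤ → ℚ) {p1 q1 p2 q2 : Polynomial ℚ} {e1 e2 : ℤ}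
    (h1 : ∀ i < e1, errC c' p1 q1 i = 0) (h2 : ∀ i < e2, errC c' p2 q2 i = 0)
    (hd2 : (q2.natDegree : ℤ) < e1) (hd1 : (q1.natDegree : ℤ) < e2) :
    q1 * p2 = q2 * p1 := by
  have key : ∀ i : ℤ, i ≤ 0 → polyCoeffZinv (q1 * p2 - q2 * p1) i = 0 := by
    intro i hi
    have eA : polyMulCoeff q2 (errC c' p1 q1) i
        = polyMulCoeff (q2 * q1) c' i - polyCoeffZinv (q2 * p1) i := by
      show polyMulCoeff q2 (fun j => polyMulCoeff q1 c' j - polyCoeffZinv p1 j) i = _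
      rw [polyMulCoeff_sub_fn, ← polyMulCoeff_mul, ← polyMulCoeff_polyCoeffZinv]
    have eB : polyMulCoeff q1 (errC c' p2 q2) i
        = polyMulCoeff (q1 * q2) c' i - polyCoeffZinv (q1 * p2) i := by
      show polyMulCoeff q1 (fun j => polyMulCoeff q2 c' j - polyCoeffZinv p2 j) i = _
      rw [polyMulCoeff_sub_fn, ← polyMulCoeff_mul, ← polyMulCoeff_polyCoeffZinv]
    have hz1 : polyMulCoeff q2 (errC c' p1 q1) i = 0 :=
      polyMulCoeff_eq_zero_of_lt h1 q2 (by omega)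
    have hz2 : polyMulCoeff q1 (errC c' p2 q2) i = 0 :=
      polyMulCoeff_eq_zero_of_lt h2 q1 (by omega)
    have hcomb : polyCoeffZinv (q1 * p2) i - polyCoeffZinv (q2 * p1) i = 0 := by
      have := hz1.symm.trans (eA)
      have h' := hz2.symm.trans (eB)
      rw [mul_comm q2 q1] at this
      linarith [this, h']
    rw [polyCoeffZinv_sub, hcomb]
  have hzero := poly_eq_zero_of_polyCoeffZinv key
  have := sub_eq_zero.1 hzero
  exact this

lemma assoc {p1 q1 p2 q2 : Polynomial ℚ} (hcop1 : IsCoprime p1 q1) (hcop2 : IsCoprime p2 q2)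
    (hq1 : q1 ≠ 0) (h : q1 * p2 = q2 * p1) :
    ∃ lam : ℚ, lam ≠ 0 ∧ q2 = Polynomial.C lam * q1 ∧ p2 = Polynomial.C lam * p1 := by
  have hd12 : q1 ∣ q2 := (hcop1.symm).dvd_of_dvd_mul_right ⟨p2, h.symm⟩
  have hd21 : q2 ∣ q1 := (hcop2.symm).dvd_of_dvd_mul_right ⟨p1, h⟩
  obtain ⟨u, hu⟩ := associated_of_dvd_dvd hd12 hd21
  obtain ⟨lam, hlamu, hC⟩ := Polynomial.isUnit_iff.1 u.isUnit
  refine ⟨lam, hlamu.ne_zero, ?_, ?_⟩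
  · rw [← hu, ← hC]; ring
  · have h2 : q1 * p2 = q1 * (Polynomial.C lam * p1) := by
      rw [h, ← hu, ← hC]; ring
    exact mul_left_cancel₀ hq1 h2

lemma window (c' : ℤ → ℚ) {p1 q1 p2 q2 : Polynomial ℚ} {e1 e2 : ℤ}
    (hcop1 : IsCoprime p1 q1) (hcop2 : IsCoprime p2 q2) (hq1 : q1 ≠ 0)
    (h1 : ∀ i < e1, errC c' p1 q1 i = 0) (h2 : ∀ i < e2, errC c' p2 q2 i = 0)
    (hd2 : (q2.natDegree : ℤ) < e1) (hd1 : (q1.natDegree : ℤ) < e2) :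
    ∃ lam : ℚ, lam ≠ 0 ∧ q2 = Polynomial.C lam * q1 ∧ p2 = Polynomial.C lam * p1 :=
  assoc hcop1 hcop2 hq1 (cross c' h1 h2 hd2 hd1)

lemma coeff_sum_C_mul_X_pow (f : ℕ → ℚ) (M m : ℕ) :
    (∑ j ∈ Finset.range M, Polynomial.C (f j) * Polynomial.X ^ j).coeff m
      = if m < M then f m else 0 := by
  classical
  rw [Polynomial.finset_sum_coeff]
  simp only [Polynomial.coeff_C_mul, Polynomial.coeff_X_pow, mul_ite, mul_one, mul_zero]
  rw [Finset.sum_ite_eq (Finset.range M) m f]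
  simp [Finset.mem_range]

lemma dirichlet (c' : ℤ → ℚ) (hc : ∃ i₀ : ℤ, ∀ i < i₀, c' i = 0) (n : ℕ) :
    ∃ p q : Polynomial ℚ, q ≠ 0 ∧ q.natDegree ≤ n ∧
      ∀ i : ℤ, i < (n:ℤ) + 1 → errC c' p q i = 0 := by
  classical
  obtain ⟨i₀, hi₀⟩ := hc
  let L : (Fin (n+1) → ℚ) →ₗ[ℚ] (Fin n → ℚ) :=
    { toFun := fun a k => ∑ j : Fin (n+1), a j * c' ((k:ℤ) + 1 + (j:ℤ))
      map_add' := by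
        intro a b; funext k
        simp [add_mul, Finset.sum_add_distrib]
      map_smul' := by
        intro m a; funext k
        simp [Finset.mul_sum, smul_eq_mul, mul_assoc] }
  have hnotinj : ¬ Function.Injective L := by
    intro hinj
    have hle := LinearMap.finrank_le_finrank_of_injective hinj
    rw [Module.finrank_fin_fun, Module.finrank_fin_fun] at hle
    omega
  rw [Function.not_injective_iff] at hnotinj
  obtain ⟨aa, bb, hab, hne⟩ := hnotinj
  set xv := aa - bb with hxv
  have hxvne : xv ≠ 0 := sub_ne_zero.2 hne
  have hLxv : L xv = 0 := by rw [hxv, map_sub, hab, sub_self]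
  set x' : ℕ → ℚ := fun m => if h : m < n+1 then xv ⟨m, h⟩ else 0 with hx'
  set q : Polynomial ℚ := ∑ j ∈ Finset.range (n+1), Polynomial.C (x' j) * Polynomial.X ^ j
    with hqdef
  have hqcoeff : ∀ m, q.coeff m = if m < n + 1 then x' m else 0 :=
    fun m => coeff_sum_C_mul_X_pow x' (n+1) m
  have hqne : q ≠ 0 := by
    have hjex : ∃ j : Fin (n+1), xv j ≠ 0 := by
      by_contra hall; push_neg at hall; exact hxvne (funext hall)
    obtain ⟨j, hj⟩ := hjex
    intro h0
    apply hj
    have hcj := hqcoeff (j : ℕ)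
    rw [h0, Polynomial.coeff_zero, if_pos j.isLt] at hcj
    rw [hx'] at hcj
    exact (by simpa using hcj.symm : (j:ℕ) ≤ n → xv j = 0) (Nat.le_of_lt_succ j.isLt)
  have hqdeg : q.natDegree ≤ n := Polynomial.natDegree_le_iff_coeff_eq_zero.2
    (fun N hN => by rw [hqcoeff N, if_neg (by omega)])
  have hker : ∀ i : ℤ, 1 ≤ i → i ≤ (n:ℤ) → polyMulCoeff q c' i = 0 := by
    intro i h1 h2
    have hk : ((i - 1).toNat : ℤ) = i - 1 := Int.toNat_of_nonneg (by omega)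
    have hklt : (i-1).toNat < n := by omega
    have hcomp : (L xv) ⟨(i-1).toNat, hklt⟩ = 0 := by rw [hLxv]; rfl
    have hLcomp : (L xv) ⟨(i-1).toNat, hklt⟩
        = ∑ j ∈ Finset.range (n+1), x' j * c' (i + j) := by
      have hrfl : (L xv) ⟨(i-1).toNat, hklt⟩
          = ∑ j : Fin (n+1), xv j * c' ((((i-1).toNat : ℕ):ℤ) + 1 + (j:ℤ)) := rfl
      rw [hrfl, ← Fin.sum_univ_eq_sum_range (fun j => x' j * c' (i + j)) (n+1)]
      refine Finset.sum_congr rfl fun j _ => ?_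
      have h1' : x' (j : ℕ) = xv j := by rw [hx']; exact dif_pos j.isLt
      have h2' : (((i-1).toNat : ℕ):ℤ) + 1 + (j:ℤ) = i + ((j:ℕ):ℤ) := by omega
      rw [h1', h2']
    have hz : ∑ j ∈ Finset.range (n+1), x' j * c' (i + j) = 0 := by
      rw [← hLcomp]; exact hcomp
    rw [polyMulCoeff_eq_sum q c' i (M := n + 1) (by omega), ← hz]
    refine Finset.sum_congr rfl fun j hj => ?_
    rw [Finset.mem_range] at hj
    rw [hqcoeff j, if_pos hj]
  set N : ℕ := (n + 1 - i₀).toNat with hN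
  set p : Polynomial ℚ := ∑ j ∈ Finset.range (N+1),
      Polynomial.C (polyMulCoeff q c' (-(j:ℤ))) * Polynomial.X ^ j with hpdef
  have hpcoeff : ∀ m, p.coeff m = if m < N+1 then polyMulCoeff q c' (-(m:ℤ)) else 0 :=
    fun m => coeff_sum_C_mul_X_pow _ (N+1) m
  have hNge : (N:ℤ) ≥ n + 1 - i₀ := Int.self_le_toNat _
  have hlowzero : ∀ i : ℤ, i < -(N:ℤ) → polyMulCoeff q c' i = 0 := by
    intro i hi
    exact polyMulCoeff_eq_zero_of_lt (e := i₀) (fun j hj => hi₀ j hj) q (by omega)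
  refine ⟨p, q, hqne, hqdeg, ?_⟩
  intro i hi
  unfold errC polyCoeffZinv
  by_cases hile : i ≤ 0
  · rw [if_pos hile, hpcoeff]
    by_cases hlt : (-i).toNat < N+1
    · rw [if_pos hlt]
      have harg : -(((-i).toNat:ℤ)) = i := by omega
      rw [harg, sub_self]
    · rw [if_neg hlt, hlowzero i (by omega), sub_zero]
  · rw [if_neg hile, hker i (by omega) (by omega), sub_zero]

lemma reduce (c' : ℤ → ℚ) (hc : ∃ i₀ : ℤ, ∀ i < i₀, c' i = 0) {p q : Polynomial ℚ}
    (hq : q ≠ 0) {e : ℤ} (h : ∀ i < e, errC c' p q i = 0) :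
    ∃ p' q' g : Polynomial ℚ, g ≠ 0 ∧ p = g * p' ∧ q = g * q' ∧ IsCoprime p' q' ∧ q' ≠ 0 ∧
      ∀ i : ℤ, i < e + g.natDegree → errC c' p' q' i = 0 := by
  classical
  set g := gcd p q with hg
  have hgne : g ≠ 0 := gcd_ne_zero_of_right hq
  have hpe : p = g * (p / g) := (EuclideanDomain.mul_div_cancel' hgne (gcd_dvd_left p q)).symm
  have hqe : q = g * (q / g) := (EuclideanDomain.mul_div_cancel' hgne (gcd_dvd_right p q)).symm
  have hcop : IsCoprime (p / g) (q / g) := isCoprime_div_gcd_div_gcd hq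
  have hqne' : q / g ≠ 0 := right_div_gcd_ne_zero hq
  refine ⟨p / g, q / g, g, hgne, hpe, hqe, hcop, hqne', ?_⟩
  have herr : ∀ i : ℤ, polyMulCoeff g (errC c' (p/g) (q/g)) i = errC c' p q i := by
    intro i
    rw [← errC_mul_poly, ← hpe, ← hqe]
  exact vanish_transfer hgne (errC_support hc (p/g) (q/g))
    (fun i hi => by rw [herr i]; exact h i hi)

lemma dirichlet' (c' : ℤ → ℚ) (hc : ∃ i₀ : ℤ, ∀ i < i₀, c' i = 0) (n : ℕ) :
    ∃ p q : Polynomial ℚ, IsCoprime p q ∧ q ≠ 0 ∧ q.natDegree ≤ n ∧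
      ∀ i : ℤ, i < (n:ℤ) + 1 → errC c' p q i = 0 := by
  obtain ⟨p, q, hq, hdeg, hvan⟩ := dirichlet c' hc n
  obtain ⟨p', q', g, hgne, hpe, hqe, hcop, hq'ne, hvan'⟩ := reduce c' hc hq hvan
  have hdeg' : q'.natDegree ≤ n := by
    have := Polynomial.natDegree_mul hgne hq'ne
    rw [← hqe] at this
    omega
  exact ⟨p', q', hcop, hq'ne, hdeg', fun i hi => hvan' i (by omega)⟩

lemma conv_at_ord (c' : ℤ → ℚ) (hc : ∃ i₀ : ℤ, ∀ i < i₀, c' i = 0)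
    {p q : Polynomial ℚ} {e : ℤ} (hcop : IsCoprime p q) (hq : q ≠ 0)
    (hdeg : (q.natDegree:ℤ) < e) (hvan : ∀ i < e, errC c' p q i = 0)
    (hne : errC c' p q e ≠ 0) :
    ∃ p2 q2 : Polynomial ℚ, IsCoprime p2 q2 ∧ q2 ≠ 0 ∧ (q2.natDegree : ℤ) = e ∧
      ∀ i < e + 1, errC c' p2 q2 i = 0 := by
  have he0 : (0:ℤ) ≤ e := le_trans (by positivity) hdeg.le
  set n := e.toNat with hn
  have hne' : (n:ℤ) = e := Int.toNat_of_nonneg he0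
  obtain ⟨p2, q2, hcop2, hq2, hdeg2, hvan2⟩ := dirichlet' c' hc n
  have hvan2' : ∀ i < e + 1, errC c' p2 q2 i = 0 := fun i hi => hvan2 i (by omega)
  by_cases hlt : (q2.natDegree:ℤ) < e
  · exfalso
    obtain ⟨lam, hlam0, hq2e, hp2e⟩ := window c' hcop hcop2 hq hvan hvan2' hlt (by omega)
    have hs := errC_smul c' lam p q e
    rw [← hp2e, ← hq2e, hvan2' e (by omega)] at hs
    exact hne ((mul_eq_zero.1 hs.symm).resolve_left hlam0)
  · have heq : (q2.natDegree:ℤ) = e := by omega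
    exact ⟨p2, q2, hcop2, hq2, heq, hvan2'⟩

lemma substPowCoeff_sub (d : ℕ) (s t : ℤ → ℚ) (i : ℤ) :
    substPowCoeff d (fun j => s j - t j) i = substPowCoeff d s i - substPowCoeff d t i := by
  unfold substPowCoeff; split <;> simp

lemma errC_comp (d : ℕ) (hd : 0 < d) (c₀ : ℤ → ℚ) (p q : Polynomial ℚ) (i : ℤ) :
    errC (substPowCoeff d c₀) (p.comp (Polynomial.X ^ d)) (q.comp (Polynomial.X ^ d)) i
      = substPowCoeff d (errC c₀ p q) i := by
  unfold errC
  rw [polyMulCoeff_comp d hd, polyCoeffZinv_comp d hd, ← substPowCoeff_sub]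

lemma isCoprime_comp {p q r : Polynomial ℚ} (h : IsCoprime p q) :
    IsCoprime (p.comp r) (q.comp r) := by
  obtain ⟨a, b, hab⟩ := h
  exact ⟨a.comp r, b.comp r, by
    rw [← Polynomial.mul_comp, ← Polynomial.mul_comp, ← Polynomial.add_comp, hab,
      Polynomial.one_comp]⟩

lemma comp_Xpow_ne_zero {p : Polynomial ℚ} (hp : p ≠ 0) (d : ℕ) (hd : 0 < d) :
    p.comp (Polynomial.X ^ d) ≠ 0 := by
  intro h
  rcases Polynomial.comp_eq_zero_iff.1 h with h1 | ⟨_, h2⟩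
  · exact hp h1
  · have hdeg := congrArg Polynomial.natDegree h2
    rw [Polynomial.natDegree_X_pow, Polynomial.natDegree_C] at hdeg
    omega

lemma mahler_err (d : ℕ) (A B : Polynomial ℚ) (c : ℤ → ℚ)
    (hfeq : ∀ i : ℤ, polyMulCoeff B c i = polyMulCoeff A (substPowCoeff d c) i)
    (p q : Polynomial ℚ) (i : ℤ) :
    errC (substPowCoeff d c) (B * p) (A * q) i = polyMulCoeff B (errC c p q) i := by
  unfold errC
  rw [show A * q = q * A from mul_comm A q, polyMulCoeff_mul,
    show (fun j => polyMulCoeff A (substPowCoeff d c) j) = fun j => polyMulCoeff B c j from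
      funext fun j => (hfeq j).symm,
    ← polyMulCoeff_mul, show q * B = B * q from mul_comm q B, polyMulCoeff_mul,
    ← polyMulCoeff_polyCoeffZinv, ← polyMulCoeff_sub_fn]

lemma natDegree_C_mul_eq {a : ℚ} (ha : a ≠ 0) (p : Polynomial ℚ) :
    (Polynomial.C a * p).natDegree = p.natDegree := by
  rcases eq_or_ne p 0 with rfl | hp
  · simp
  · rw [Polynomial.natDegree_mul (by simpa using ha) hp, Polynomial.natDegree_C, zero_add]

end MahlerAux


/-- **Lemma 6.** The size of a primitive gap in `Φ(f)` does not exceed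
`(2d - 1)(r_a + r_b)/(d - 1)`. -/
theorem statement10
    (d : ℕ) (hd : 2 ≤ d)
    (A B : Polynomial ℚ) (hA : A ≠ 0) (hB : B ≠ 0) (hAB : IsCoprime A B)
    (c : ℤ → ℚ) (hc : IsLaurentSupport c)
    (hfeq : MahlerEq d A B c)
    (hnotrat : ¬ IsRationalFun c)
    (u v : ℕ) (hprim : PrimitiveGap c A B d u v) :
    (v : ℝ) - (u : ℝ)
      ≤ (2 * (d : ℝ) - 1) * ((A.natDegree : ℝ) + (B.natDegree : ℝ)) / ((d : ℝ) - 1) := by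
  classical
  by_contra hcon
  push_neg at hcon
  set ra := A.natDegree with hra
  set rb := B.natDegree with hrb
  have hdR : (2:ℝ) ≤ (d:ℝ) := by exact_mod_cast hd
  have hdpos : 0 < d := by omega
  obtain ⟨hbig, hnoprec⟩ := hprim
  obtain ⟨hgap, hsize⟩ := hbig
  obtain ⟨huφ, hvφ, huv, hmid⟩ := hgap
  -- size of the gap exceeds ra + rb (integer version)
  have hT : ((ra:ℝ) + rb) ≤ (2*(d:ℝ)-1) * ((ra:ℝ)+(rb:ℝ)) / ((d:ℝ)-1) := by
    rw [le_div_iff₀ (by linarith)]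
    have h1 : (0:ℝ) ≤ (ra:ℝ) + rb := by positivity
    nlinarith
  have hvu_real : ((ra:ℝ) + rb) < (v:ℝ) - u := lt_of_le_of_lt hT hcon
  have hvu : (u:ℤ) + ra + rb < (v:ℤ) := by
    have h1 : (((u:ℤ) + ra + rb : ℤ):ℝ) < ((v:ℤ):ℝ) := by push_cast; linarith
    exact_mod_cast h1
  -- the convergent at u and its exact order e = v
  obtain ⟨p, q, hconv, hqu⟩ := huφ
  obtain ⟨hcop, hqne, hvanu⟩ := hconv
  have hvan_u : ∀ i : ℤ, i < (u:ℤ) + 1 → MahlerAux.errC c p q i = 0 := fun i hi =>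
    sub_eq_zero_of_eq (hvanu i (by rw [hqu]; omega))
  have hex : ∃ i, MahlerAux.errC c p q i ≠ 0 := by
    by_contra hall; push_neg at hall
    exact hnotrat ⟨p, q, hqne, fun i => sub_eq_zero.1 (hall i)⟩
  obtain ⟨e, hee, hemin⟩ := MahlerAux.exists_ord (MahlerAux.errC_support hc p q) hex
  have heu : (u:ℤ) < e := by
    by_contra hle; push_neg at hle
    exact hee (hvan_u e (by omega))
  obtain ⟨p2, q2, hcop2, hq2ne, hq2deg, hvan2⟩ :=
    MahlerAux.conv_at_ord c hc hcop hqne (by rw [hqu]; exact heu) hemin hee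
  have he_mem : e.toNat ∈ convDegrees c := by
    refine ⟨p2, q2, ⟨hcop2, hq2ne, fun i hi => sub_eq_zero.1 (hvan2 i (by omega))⟩, by omega⟩
  have hno_mid : ∀ x : ℕ, (u:ℤ) < (x:ℤ) → (x:ℤ) < e → x ∉ convDegrees c := by
    rintro x hx1 hx2 ⟨p3, q3, ⟨hcop3, hq3ne, hvan3⟩, hq3deg⟩
    have hvan3' : ∀ i < (x:ℤ) + 1, MahlerAux.errC c p3 q3 i = 0 := fun i hi =>
      sub_eq_zero_of_eq (hvan3 i (by rw [hq3deg]; omega))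
    obtain ⟨lam, hlam0, hq3e, _⟩ := MahlerAux.window c hcop hcop3 hqne hemin hvan3'
      (by rw [hq3deg]; exact hx2) (by rw [hqu]; omega)
    have hnd := MahlerAux.natDegree_C_mul_eq hlam0 q
    rw [← hq3e] at hnd
    omega
  have hev : e = (v:ℤ) := by
    rcases lt_trichotomy e (v:ℤ) with h | h | h
    · exact absurd he_mem (hmid e.toNat (by omega) (by omega))
    · exact h
    · exact absurd hvφ (hno_mid v (by exact_mod_cast huv) h)
  have hvanv : ∀ i < (v:ℤ), MahlerAux.errC c p q i = 0 := by rw [← hev]; exact hemin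
  -- support of the composed series
  have hgcsupp : ∃ i₀ : ℤ, ∀ i < i₀, substPowCoeff d c i = 0 := by
    obtain ⟨i₀, h0⟩ := hc
    refine ⟨(d:ℤ) * i₀, fun i hi => ?_⟩
    unfold substPowCoeff
    split
    · next hdvd =>
        obtain ⟨k, rfl⟩ := hdvd
        rw [Int.mul_ediv_cancel_left _ (by exact_mod_cast hdpos.ne')]
        exact h0 k (lt_of_mul_lt_mul_left hi (by positivity))
    · rfl
  -- transported error and its reduction
  have hAq_ne : A * q ≠ 0 := mul_ne_zero hA hqne
  have hvanBig : ∀ i : ℤ, i < (v:ℤ) - rb →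
      MahlerAux.errC (substPowCoeff d c) (B * p) (A * q) i = 0 := by
    intro i hi
    rw [MahlerAux.mahler_err d A B c hfeq]
    exact MahlerAux.polyMulCoeff_eq_zero_of_lt hvanv B (by omega)
  obtain ⟨P, Q, g, hgne, hBp, hAq, hcopPQ, hQne, hvanPQ⟩ :=
    MahlerAux.reduce (substPowCoeff d c) hgcsupp hAq_ne hvanBig
  set γ := g.natDegree with hγ
  set w := Q.natDegree with hw
  have hdegsum : ra + u = γ + w := by
    have h1 : (A * q).natDegree = ra + u := by rw [Polynomial.natDegree_mul hA hqne, hqu]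
    have h2 : (A * q).natDegree = γ + w := by rw [hAq, Polynomial.natDegree_mul hgne hQne]
    omega
  -- the largest convergent degree u0 with d*u0 ≤ w
  have h0mem : (0:ℕ) ∈ convDegrees c := by
    obtain ⟨p0, q0, hcop0, hq0, hdeg0, hvan0⟩ := MahlerAux.dirichlet' c hc 0
    exact ⟨p0, q0, ⟨hcop0, hq0, fun i hi => sub_eq_zero.1 (hvan0 i (by omega))⟩, by omega⟩
  set PRED := fun x : ℕ => x ∈ convDegrees c ∧ d * x ≤ w with hPRED
  set u0 := Nat.findGreatest PRED w with hu0
  have hu0spec : PRED u0 := Nat.findGreatest_spec (m := 0) (Nat.zero_le w)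
    ⟨h0mem, by omega⟩
  obtain ⟨hu0φ, hu0le⟩ := hu0spec
  have hu0max : ∀ k : ℕ, u0 < k → k ≤ w → ¬ PRED k := by
    intro k h1 h2
    rw [hu0] at h1
    exact Nat.findGreatest_is_greatest h1 h2
  obtain ⟨p0, q0, hconv0, hq0u0⟩ := hu0φ
  obtain ⟨hcop0, hq0ne, hvanu0'⟩ := hconv0
  have hu0φ' : u0 ∈ convDegrees c := ⟨p0, q0, ⟨hcop0, hq0ne, hvanu0'⟩, hq0u0⟩
  have hvan_u0 : ∀ i : ℤ, i < (u0:ℤ) + 1 → MahlerAux.errC c p0 q0 i = 0 := fun i hi =>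
    sub_eq_zero_of_eq (hvanu0' i (by rw [hq0u0]; omega))
  have hex0 : ∃ i, MahlerAux.errC c p0 q0 i ≠ 0 := by
    by_contra hall; push_neg at hall
    exact hnotrat ⟨p0, q0, hq0ne, fun i => sub_eq_zero.1 (hall i)⟩
  obtain ⟨e0, he0ne, he0min⟩ := MahlerAux.exists_ord (MahlerAux.errC_support hc p0 q0) hex0
  have he0u0 : (u0:ℤ) < e0 := by
    by_contra hle; push_neg at hle
    exact he0ne (hvan_u0 e0 (by omega))
  set v0 := e0.toNat with hv0
  have hv0e0 : (v0:ℤ) = e0 := Int.toNat_of_nonneg (le_trans (Int.ofNat_nonneg u0) he0u0.le)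
  obtain ⟨pv, qv, hcopv, hqvne, hqvdeg, hvanv0⟩ :=
    MahlerAux.conv_at_ord c hc hcop0 hq0ne (by rw [hq0u0]; exact he0u0) he0min he0ne
  have hv0φ : v0 ∈ convDegrees c :=
    ⟨pv, qv, ⟨hcopv, hqvne, fun i hi => sub_eq_zero.1 (hvanv0 i (by omega))⟩, by omega⟩
  have hmid0 : ∀ x : ℕ, u0 < x → x < v0 → x ∉ convDegrees c := by
    rintro x hx1 hx2 ⟨p3, q3, ⟨hcop3, hq3ne, hvan3⟩, hq3deg⟩
    have hvan3' : ∀ i < (x:ℤ) + 1, MahlerAux.errC c p3 q3 i = 0 := fun i hi =>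
      sub_eq_zero_of_eq (hvan3 i (by rw [hq3deg]; omega))
    obtain ⟨lam, hlam0, hq3e, _⟩ := MahlerAux.window c hcop0 hcop3 hq0ne he0min hvan3'
      (by rw [hq3deg]; omega) (by rw [hq0u0]; omega)
    have hnd := MahlerAux.natDegree_C_mul_eq hlam0 q0
    rw [← hq3e] at hnd
    omega
  have hgap0 : GapIn c u0 v0 := ⟨hu0φ', hv0φ, by omega, hmid0⟩
  -- d * v0 > w by maximality
  have hwv0 : (w:ℤ) < (d:ℤ) * v0 := by
    by_contra hle; push_neg at hle
    have h1 : d * v0 ≤ w := by exact_mod_cast hle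
    have h2 : u0 < v0 := by omega
    have h3 : v0 ≤ d * v0 := Nat.le_mul_of_pos_left v0 hdpos
    exact hu0max v0 h2 (by omega) ⟨hv0φ, h1⟩
  -- compare (P,Q) with the composed convergent (p0∘, q0∘)
  have hvanComp : ∀ i < (d:ℤ) * e0, MahlerAux.errC (substPowCoeff d c)
      (p0.comp (Polynomial.X ^ d)) (q0.comp (Polynomial.X ^ d)) i = 0 := by
    intro i hi
    rw [MahlerAux.errC_comp d hdpos]
    unfold substPowCoeff
    split
    · next hdvd =>
        obtain ⟨k, rfl⟩ := hdvd
        rw [Int.mul_ediv_cancel_left _ (by exact_mod_cast hdpos.ne')]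
        exact he0min k (lt_of_mul_lt_mul_left hi (by positivity))
    · rfl
  have hvalComp : MahlerAux.errC (substPowCoeff d c)
      (p0.comp (Polynomial.X ^ d)) (q0.comp (Polynomial.X ^ d)) ((d:ℤ) * e0) ≠ 0 := by
    rw [MahlerAux.errC_comp d hdpos]
    unfold substPowCoeff
    rw [if_pos (dvd_mul_right (d:ℤ) e0),
      Int.mul_ediv_cancel_left _ (by exact_mod_cast hdpos.ne' : (d:ℤ) ≠ 0)]
    exact he0ne
  have hdeg_q0c : (q0.comp (Polynomial.X ^ d)).natDegree = d * u0 := by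
    rw [Polynomial.natDegree_comp, Polynomial.natDegree_X_pow, hq0u0, mul_comm]
  obtain ⟨lam, hlam0, hQe, hPe⟩ := MahlerAux.window (substPowCoeff d c)
    (MahlerAux.isCoprime_comp hcop0) hcopPQ (MahlerAux.comp_Xpow_ne_zero hq0ne d hdpos)
    hvanComp hvanPQ
    (by rw [← hv0e0]; exact hwv0)
    (by rw [hdeg_q0c]; push_cast; omega)
  -- exact order comparison: v - rb + γ ≤ d * e0
  have hordPQ : (v:ℤ) - rb + γ ≤ (d:ℤ) * e0 := by
    by_contra hlt; push_neg at hlt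
    have h1 := hvanPQ ((d:ℤ)*e0) hlt
    rw [hQe, hPe, MahlerAux.errC_smul] at h1
    exact hvalComp ((mul_eq_zero.1 h1).resolve_left hlam0)
  -- GapPrec
  have hprec : GapPrec c A B d u0 u := by
    refine ⟨p0, q0, p, q, 1, one_pos, ⟨hcop0, hq0ne, hvanu0'⟩, hq0u0,
      ⟨hcop, hqne, hvanu⟩, hqu, ?_⟩
    have hBp' : B * p = g * (Polynomial.C lam * (p0.comp (Polynomial.X ^ d))) := by
      rw [← hPe, ← hBp]
    have hAq' : A * q = g * (Polynomial.C lam * (q0.comp (Polynomial.X ^ d))) := by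
      rw [← hQe, ← hAq]
    simp only [Finset.prod_range_one, pow_zero, pow_one, Polynomial.comp_X]
    linear_combination (q0.comp (Polynomial.X ^ d)) * hBp'
      - (p0.comp (Polynomial.X ^ d)) * hAq'
  -- BigGap at [u0, v0]
  have hbig0 : BigGap c A B d u0 v0 := by
    refine ⟨hgap0, ?_⟩
    have hi1 : (d:ℤ) * u0 + γ ≤ (u:ℤ) + ra := by
      have h1 : (d * u0 : ℤ) ≤ (w:ℤ) := by exact_mod_cast hu0le
      omega
    have hkey : (v:ℤ) - u - ra - rb ≤ (d:ℤ) * v0 - (d:ℤ) * u0 := by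
      rw [hv0e0]; omega
    have hkeyR : ((v:ℝ) - u) - ((ra:ℝ)+rb) ≤ (d:ℝ) * ((v0:ℝ) - (u0:ℝ)) := by
      have h : (((v:ℤ) - u - ra - rb : ℤ):ℝ) ≤ (((d:ℤ) * v0 - (d:ℤ) * u0 : ℤ):ℝ) := Int.cast_le.2 hkey
      push_cast at h
      linarith
    rw [div_lt_iff₀ (by linarith)]
    have hsge : (0:ℝ) ≤ (ra:ℝ) + rb := by positivity
    have hbne : ((d:ℝ) - 1) ≠ 0 := by linarith
    have hexp : (2*(d:ℝ)-1) * ((ra:ℝ)+(rb:ℝ)) / ((d:ℝ)-1) - ((ra:ℝ)+rb)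
        = ((ra:ℝ)+rb) * (d:ℝ) / ((d:ℝ)-1) := by
      rw [eq_div_iff hbne, sub_mul, div_mul_cancel₀ _ hbne]
      ring
    have h5 : ((ra:ℝ)+rb) * (d:ℝ) / ((d:ℝ)-1) < (d:ℝ) * ((v0:ℝ) - (u0:ℝ)) := by
      rw [← hexp]
      linarith
    rw [div_lt_iff₀ (by linarith)] at h5
    nlinarith
  exact hnoprec ⟨u0, v0, hbig0, hprec⟩
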